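/- For the Lie algebra sl₂(ℂ) with standard basis e, f, h, the Verma module M_λ of highest weight λ ∈ ℂ is a simple module if and only if λ is not a nonnegative integer. -/
import Mathlib


/-! The Verma module `M_λ` for `sl₂(ℂ)` in its concrete realization: underlying space
`ℕ →₀ ℂ` with basis `(fⁿv)_{n ≥ 0}`, where `f` acts by the shift `fⁿv ↦ f^{n+1}v`,
`h · fⁿv = (λ − 2n) fⁿv` and `e · fⁿv = n(λ − n + 1) f^{n−1}v`. -/

/-- The action of `f` on `M_λ`. -/
noncomputable def vermaF : (ℕ →₀ ℂ) →ₗ[ℂ] (ℕ →₀ ℂ) :=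
  Finsupp.lsum ℂ fun n => LinearMap.toSpanSingleton ℂ (ℕ →₀ ℂ) (Finsupp.single (n + 1) 1)

/-- The action of `e` on `M_λ`. -/
noncomputable def vermaE (lam : ℂ) : (ℕ →₀ ℂ) →ₗ[ℂ] (ℕ →₀ ℂ) :=
  Finsupp.lsum ℂ fun n => LinearMap.toSpanSingleton ℂ (ℕ →₀ ℂ)
    (((n : ℂ) * (lam - n + 1)) • Finsupp.single (n - 1) 1)

/-- The action of `h` on `M_λ`. -/
noncomputable def vermaH (lam : ℂ) : (ℕ →₀ ℂ) →ₗ[ℂ] (ℕ →₀ ℂ) :=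
  Finsupp.lsum ℂ fun n => LinearMap.toSpanSingleton ℂ (ℕ →₀ ℂ)
    ((lam - 2 * n) • Finsupp.single n 1)

/-- A subspace of `M_λ` invariant under the `sl₂`-action. -/
def sl2Invariant (lam : ℂ) (N : Submodule ℂ (ℕ →₀ ℂ)) : Prop :=
  ∀ x ∈ N, vermaE lam x ∈ N ∧ vermaF x ∈ N ∧ vermaH lam x ∈ N

lemma vermaF_single (n : ℕ) (c : ℂ) : vermaF (Finsupp.single n c) = Finsupp.single (n+1) c := by
  simp [vermaF, LinearMap.toSpanSingleton_apply, Finsupp.smul_single]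

lemma vermaF_apply (x : ℕ →₀ ℂ) (k : ℕ) : vermaF x (k+1) = x k := by
  rw [vermaF, Finsupp.lsum_apply, Finsupp.sum_apply]
  simp only [LinearMap.toSpanSingleton_apply, Finsupp.smul_apply, Finsupp.single_apply,
    smul_eq_mul, mul_ite, mul_one, mul_zero, add_left_inj]
  rw [Finsupp.sum_ite_eq' x k (fun _ v => v)]
  simp only [Finsupp.mem_support_iff, ite_not]
  split
  · next h => exact h.symm
  · rfl

lemma vermaF_apply_zero (x : ℕ →₀ ℂ) : vermaF x 0 = 0 := by
  rw [vermaF, Finsupp.lsum_apply, Finsupp.sum_apply]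
  simp [Finsupp.single_apply, Finsupp.sum]

lemma vermaH_apply (lam : ℂ) (x : ℕ →₀ ℂ) (k : ℕ) : vermaH lam x k = (lam - 2*k) * x k := by
  rw [vermaH, Finsupp.lsum_apply, Finsupp.sum_apply]
  simp only [LinearMap.toSpanSingleton_apply, Finsupp.smul_apply, Finsupp.single_apply,
    smul_eq_mul, mul_ite, mul_one, mul_zero]
  rw [Finsupp.sum_ite_eq' x k (fun a b => b * (lam - 2 * a))]
  split
  · ring
  · next h => simp [Finsupp.notMem_support_iff.mp h]

lemma vermaE_apply (lam : ℂ) (x : ℕ →₀ ℂ) (k : ℕ) :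
    vermaE lam x k = ((k:ℂ)+1) * (lam - k) * x (k+1) := by
  rw [vermaE, Finsupp.lsum_apply, Finsupp.sum_apply]
  simp only [LinearMap.toSpanSingleton_apply, Finsupp.smul_apply, Finsupp.single_apply,
    smul_eq_mul, mul_ite, mul_one, mul_zero]
  rw [Finsupp.sum]
  rw [Finset.sum_eq_single (k+1)]
  · simp only [Nat.add_sub_cancel, if_pos rfl]
    push_cast
    ring
  · intro b hb hbk
    by_cases hbe : b - 1 = k
    · have hb0 : b = 0 := by omega
      subst hb0
      simp
    · rw [if_neg hbe]
  · intro h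
    simp [Finsupp.notMem_support_iff.mp h]

lemma key_single_zero (lam : ℂ) (hlam : ∀ m : ℕ, lam ≠ (m : ℂ))
    (N : Submodule ℂ (ℕ →₀ ℂ)) (hN : sl2Invariant lam N) :
    ∀ (n : ℕ) (x : ℕ →₀ ℂ), x ∈ N → (∀ k, n < k → x k = 0) → x n ≠ 0 →
      Finsupp.single 0 (1:ℂ) ∈ N := by
  intro n
  induction n with
  | zero =>
    intro x hxN htop hx0
    have hxe : x = Finsupp.single 0 (x 0) := by
      ext k
      rcases Nat.eq_zero_or_pos k with rfl | hk
      · simp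
      · rw [htop k hk, Finsupp.single_apply, if_neg (by omega)]
      
    have hsm : (x 0)⁻¹ • x ∈ N := N.smul_mem _ ‹x ∈ N›
    have he : (x 0)⁻¹ • x = Finsupp.single 0 (1:ℂ) := by
      ext k
      rcases Nat.eq_zero_or_pos k with rfl | hk
      · simp [inv_mul_cancel₀ hx0]
      · simp only [Finsupp.smul_apply, htop k hk, smul_zero, Finsupp.single_apply]
        rw [if_neg (by omega)]
    rwa [he] at hsm
  | succ n ih =>
    intro x hxN htop hx0
    refine ih (vermaE lam x) (hN x hxN).1 ?_ ?_
    · intro k hk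
      rw [vermaE_apply, htop (k+1) (by omega), mul_zero]
    · rw [vermaE_apply]
      refine mul_ne_zero (mul_ne_zero ?_ ?_) hx0
      · exact Nat.cast_add_one_ne_zero n
      · exact sub_ne_zero.mpr (hlam n)

/-- For `sl₂(ℂ)`, the Verma module `M_λ` of highest weight `λ ∈ ℂ` is a simple module if
and only if `λ` is not a nonnegative integer. -/
theorem stmt10 (lam : ℂ) :
    (∀ N : Submodule ℂ (ℕ →₀ ℂ), sl2Invariant lam N → N = ⊥ ∨ N = ⊤) ↔
      ∀ m : ℕ, lam ≠ (m : ℂ) := by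
  constructor
  · -- simple → λ not a nonnegative integer
    intro hsimple m hlm
    set N : Submodule ℂ (ℕ →₀ ℂ) :=
      { carrier := {x | ∀ k ≤ m, x k = 0}
        add_mem' := fun ha hb k hk => by simp [ha k hk, hb k hk]
        zero_mem' := fun k _ => rfl
        smul_mem' := fun c x hx k hk => by simp [hx k hk] } with hNdef
    have hmem : ∀ x : ℕ →₀ ℂ, x ∈ N ↔ ∀ k ≤ m, x k = 0 := fun x => Iff.rfl
    have hinv : sl2Invariant lam N := by
      intro x hx
      refine ⟨?_, ?_, ?_⟩
      · intro k hk
        rw [vermaE_apply]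
        rcases eq_or_lt_of_le hk with rfl | hk'
        · rw [hlm, sub_self, mul_zero, zero_mul]
        · rw [(hmem x).mp hx (k+1) (by omega), mul_zero]
      · intro k hk
        rcases Nat.eq_zero_or_pos k with rfl | hkpos
        · exact vermaF_apply_zero x
        · obtain ⟨j, rfl⟩ := Nat.exists_eq_add_of_lt hkpos
          simp only [zero_add]
          rw [vermaF_apply, (hmem x).mp hx j (by omega)]
      · intro k hk
        rw [vermaH_apply, (hmem x).mp hx k hk, mul_zero]
    rcases hsimple N hinv with hbot | htopp
    · have : Finsupp.single (m+1) (1:ℂ) ∈ N := by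
        intro k hk
        rw [Finsupp.single_apply, if_neg (by omega)]
      rw [hbot, Submodule.mem_bot] at this
      exact one_ne_zero (Finsupp.single_eq_zero.mp this)
    · have : Finsupp.single 0 (1:ℂ) ∈ N := htopp ▸ Submodule.mem_top
      have := this 0 (Nat.zero_le m)
      simp at this
  · -- λ not a nonnegative integer → simple
    intro hlam N hN
    by_cases hbot : N = ⊥
    · exact Or.inl hbot
    right
    obtain ⟨x, hxN, hx0⟩ := Submodule.ne_bot_iff N |>.mp hbot
    have hsupp : x.support.Nonempty := Finsupp.support_nonempty_iff.mpr hx0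
    set n := x.support.max' hsupp with hn
    have hxn : x n ≠ 0 := Finsupp.mem_support_iff.mp (x.support.max'_mem hsupp)
    have htop : ∀ k, n < k → x k = 0 := by
      intro k hk
      by_contra hne
      exact absurd (x.support.le_max' k (Finsupp.mem_support_iff.mpr hne)) (by omega)
    have h0 : Finsupp.single 0 (1:ℂ) ∈ N := key_single_zero lam hlam N hN n x hxN htop hxn
    have hall : ∀ k, Finsupp.single k (1:ℂ) ∈ N := by
      intro k
      induction k with
      | zero => exact h0
      | succ k ih =>
        have := (hN _ ih).2.1
        rwa [vermaF_single] at this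
    rw [eq_top_iff]
    intro y _
    rw [← Finsupp.sum_single y]
    refine N.sum_mem fun k _ => ?_
    rw [← Finsupp.smul_single_one]
    exact N.smul_mem _ (hall k)
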